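/- The circulant graphs G_{{2,5}} and G_{{1,3}} each embed as subgraphs into the complement P̄ of the Petersen graph: G_{{2,5}} ↪ P̄ and G_{{1,3}} ↪ P̄. Moreover, the Petersen graph embeds as a subgraph into its own complement: P ↪ P̄. -/

import Mathlib

open SimpleGraph

/-- The circulant graph `G_D` on `ZMod 10`: distinct `i, j` are adjacent iff
`i - j ∈ D` or `j - i ∈ D`. -/
def circ (D : Set (ZMod 10)) : SimpleGraph (ZMod 10) :=
  SimpleGraph.fromRel (fun i j => i - j ∈ D)

/-- The Petersen graph: vertices are the 2-element subsets of a 5-element set,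
adjacent iff disjoint. -/
def petersen : SimpleGraph {s : Finset (Fin 5) // s.card = 2} where
  Adj a b := Disjoint a.1 b.1
  symm := ⟨fun a b h => h.symm⟩
  loopless := ⟨fun a h => by
    have h0 : a.1 = ∅ := by simpa using disjoint_self.mp h
    have h2 := a.2
    rw [h0] at h2
    simp at h2⟩

abbrev PV := {s : Finset (Fin 5) // s.card = 2}

def pv (a b : Fin 5) (h : ({a, b} : Finset (Fin 5)).card = 2 := by decide) : PV :=
  ⟨{a, b}, h⟩

instance : DecidableRel petersen.Adj := fun a b =>
  inferInstanceAs (Decidable (Disjoint a.1 b.1))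

instance decCirc (D : Set (ZMod 10)) [DecidablePred (· ∈ D)] :
    DecidableRel (circ D).Adj := fun a b =>
  inferInstanceAs (Decidable (a ≠ b ∧ (a - b ∈ D ∨ b - a ∈ D)))

instance dec25 : DecidablePred (· ∈ ({2, 5} : Set (ZMod 10))) := fun a =>
  inferInstanceAs (Decidable (a = 2 ∨ a = 5))

instance dec13 : DecidablePred (· ∈ ({1, 3} : Set (ZMod 10))) := fun a =>
  inferInstanceAs (Decidable (a = 1 ∨ a = 3))

def f1 : ZMod 10 → PV :=
  ![pv 0 1, pv 0 2, pv 0 3, pv 1 2, pv 3 4, pv 1 3, pv 0 4, pv 2 3, pv 1 4, pv 2 4]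

def f2 : ZMod 10 → PV :=
  ![pv 0 1, pv 0 2, pv 0 3, pv 0 4, pv 2 4, pv 2 3, pv 3 4, pv 1 4, pv 1 2, pv 1 3]

def f3 : PV → PV := fun a =>
  if a.1 = {0, 1} then pv 0 1 else
  if a.1 = {0, 2} then pv 0 2 else
  if a.1 = {0, 3} then pv 1 3 else
  if a.1 = {0, 4} then pv 2 4 else
  if a.1 = {1, 2} then pv 3 4 else
  if a.1 = {1, 3} then pv 0 4 else
  if a.1 = {1, 4} then pv 2 3 else
  if a.1 = {2, 3} then pv 1 2 else
  if a.1 = {2, 4} then pv 1 4 else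
  pv 0 3

/-- Subgraph embeddings: `G_{{2,5}} ↪ P̄`, `G_{{1,3}} ↪ P̄`, and `P ↪ P̄`. -/
theorem stmt_18 :
    (∃ f : circ {2, 5} →g petersenᶜ, Function.Injective f) ∧
    (∃ f : circ {1, 3} →g petersenᶜ, Function.Injective f) ∧
    (∃ f : petersen →g petersenᶜ, Function.Injective f) := by
  refine ⟨⟨⟨f1, ?_⟩, ?_⟩, ⟨⟨f2, ?_⟩, ?_⟩, ⟨⟨f3, ?_⟩, ?_⟩⟩
  · exact fun {a b} => by revert a b; decide
  · exact fun a b => by revert a b; decide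
  · exact fun {a b} => by revert a b; decide
  · exact fun a b => by revert a b; decide
  · exact fun {a b} => by revert a b; decide
  · exact fun a b => by revert a b; decide
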